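/- Let P be a finite set of points in ℝ^d, let k be an integer with 1 ≤ k ≤ |P|, and let B be a nonempty compact convex subset of ℝ^d (for instance, a closed Euclidean ball). Then B intersects the convex hull of every k-element subset of P if and only if every open halfspace of ℝ^d that is disjoint from B contains fewer than k points of P. -/

import Mathlib

open scoped Classical

/-- Let `P` be a finite set of points in `ℝ^d`, `1 ≤ k ≤ |P|`, and let `B` be
a nonempty compact convex subset of `ℝ^d`.  Then `B` intersects the convex
hull of every `k`-element subset of `P` iff every open halfspace
`{x : ⟪a,x⟫ < b}` (`a ≠ 0`) disjoint from `B` contains fewer than `k`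
points of `P`. -/
theorem stmt_6 (d : ℕ) (P : Finset (EuclideanSpace ℝ (Fin d))) (k : ℕ)
    (hk₁ : 1 ≤ k) (hk₂ : k ≤ P.card)
    (B : Set (EuclideanSpace ℝ (Fin d)))
    (hBne : B.Nonempty) (hBcompact : IsCompact B) (hBconvex : Convex ℝ B) :
    (∀ Q ⊆ P, Q.card = k →
        (B ∩ convexHull ℝ (Q : Set (EuclideanSpace ℝ (Fin d)))).Nonempty) ↔
      (∀ (a : EuclideanSpace ℝ (Fin d)) (b : ℝ), a ≠ 0 →
        Disjoint B {x : EuclideanSpace ℝ (Fin d) | (inner ℝ a x : ℝ) < b} →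
        (P.filter fun x => (inner ℝ a x : ℝ) < b).card < k) := by
  constructor
  · intro h a b ha hdisj
    by_contra hle
    push_neg at hle
    obtain ⟨Q, hQsub, hQcard⟩ :=
      Finset.exists_subset_card_eq hle
    obtain ⟨x, hxB, hxQ⟩ := h Q (hQsub.trans (P.filter_subset _)) hQcard
    have hconv : Convex ℝ {x : EuclideanSpace ℝ (Fin d) | (inner ℝ a x : ℝ) < b} :=
      convex_halfSpace_lt (innerSL ℝ a).toLinearMap.isLinear b
    have hxH : x ∈ {x : EuclideanSpace ℝ (Fin d) | (inner ℝ a x : ℝ) < b} := by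
      refine convexHull_min ?_ hconv hxQ
      intro q hq
      exact (Finset.mem_filter.mp (hQsub hq)).2
    exact hdisj.ne_of_mem hxB hxH rfl
  · intro h Q hQP hQk
    by_contra hne
    rw [Set.not_nonempty_iff_eq_empty] at hne
    have hdisj : Disjoint (convexHull ℝ (Q : Set (EuclideanSpace ℝ (Fin d)))) B := by
      rw [Set.disjoint_iff_inter_eq_empty, Set.inter_comm]; exact hne
    have hQcomp : IsCompact (convexHull ℝ (Q : Set (EuclideanSpace ℝ (Fin d)))) :=
      Q.finite_toSet.isCompact_convexHull ℝ
    obtain ⟨f, u, v, hfu, huv, hfv⟩ :=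
      geometric_hahn_banach_compact_closed (convex_convexHull ℝ _) hQcomp
        hBconvex hBcompact.isClosed hdisj
    set a := (InnerProductSpace.toDual ℝ (EuclideanSpace ℝ (Fin d))).symm f with ha
    have hinner : ∀ x, (inner ℝ a x : ℝ) = f x := fun x =>
      InnerProductSpace.toDual_symm_apply
    have hQne : Q.Nonempty := Finset.card_pos.mp (hQk ▸ hk₁)
    obtain ⟨q, hq⟩ := hQne
    obtain ⟨y, hy⟩ := hBne
    have haz : a ≠ 0 := by
      intro h0
      have h1 : f q < u := hfu q (subset_convexHull ℝ _ hq)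
      have h2 : v < f y := hfv y hy
      rw [← hinner, h0, inner_zero_left] at h1 h2
      linarith
    have hd : Disjoint B {x : EuclideanSpace ℝ (Fin d) | (inner ℝ a x : ℝ) < u} := by
      rw [Set.disjoint_left]
      intro x hxB hxH
      have := hfv x hxB
      rw [Set.mem_setOf_eq, hinner] at hxH
      linarith
    have hcard := h a u haz hd
    have hsub : Q ⊆ P.filter fun x => (inner ℝ a x : ℝ) < u := by
      intro x hx
      refine Finset.mem_filter.mpr ⟨hQP hx, ?_⟩
      rw [hinner]
      exact hfu x (subset_convexHull ℝ _ hx)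
    have := Finset.card_le_card hsub
    omega
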